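/- If the kernel of a positive linear functional l on a Riesz space X is a Grothendieck subspace and l is not a Riesz homomorphism, then l decomposes as a sum of two nonzero Riesz homomorphisms. -/

import Mathlib

set_option linter.unusedSectionVars false
set_option maxHeartbeats 1000000


variable {X : Type*} [Lattice X] [AddCommGroup X]
  [CovariantClass X X (· + ·) (· ≤ ·)] [Module ℝ X] [PosSMulMono ℝ X]

/-- A Grothendieck subspace: closed under `x ⊔ y ⊔ 0 + x ⊓ y ⊓ 0`. -/
def IsGrothendieckSubspace (H : Submodule ℝ X) : Prop :=
  ∀ x ∈ H, ∀ y ∈ H, x ⊔ y ⊔ 0 + x ⊓ y ⊓ 0 ∈ H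

/-- A Riesz subspace: closed under the lattice operations. -/
def IsRieszSubspace (H : Submodule ℝ X) : Prop :=
  ∀ x ∈ H, ∀ y ∈ H, x ⊔ y ∈ H ∧ x ⊓ y ∈ H

/-- A Riesz homomorphism: a linear map preserving finite suprema. -/
def IsRieszHom (f : X →ₗ[ℝ] ℝ) : Prop :=
  ∀ x y : X, f (x ⊔ y) = f x ⊔ f y

/-- A positive linear functional. -/
def IsPositive (f : X →ₗ[ℝ] ℝ) : Prop :=
  ∀ x : X, 0 ≤ x → 0 ≤ f x

/-- `p` is the positive part of the order bounded functional `l`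
(so `l₋ = p - l` and `|l| = p + (p - l)`). -/
def IsPosPartOf (l p : X →ₗ[ℝ] ℝ) : Prop :=
  IsPositive p ∧ IsPositive (p - l) ∧
    ∀ x : X, 0 ≤ x → p x = sSup {r : ℝ | ∃ y : X, 0 ≤ y ∧ y ≤ x ∧ l y = r}


lemma aux_smul_mono_scalar {s t : ℝ} (h : s ≤ t) {x : X} (hx : 0 ≤ x) : s • x ≤ t • x := by
  have h2 : 0 ≤ (t - s) • x := smul_nonneg (by linarith) hx
  calc s • x = s • x + 0 := by abel
  _ ≤ s • x + (t - s) • x := add_le_add le_rfl h2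
  _ = t • x := by rw [← add_smul]; ring_nf

lemma aux_smul_inf {c : ℝ} (hc : 0 < c) (a b : X) : c • (a ⊓ b) = (c • a) ⊓ (c • b) := by
  apply le_antisymm
  · exact le_inf (smul_le_smul_of_nonneg_left inf_le_left hc.le)
      (smul_le_smul_of_nonneg_left inf_le_right hc.le)
  · have h1 : c⁻¹ • ((c • a) ⊓ (c • b)) ≤ a ⊓ b := by
      refine le_inf ?_ ?_
      · calc c⁻¹ • ((c • a) ⊓ (c • b)) ≤ c⁻¹ • (c • a) :=
            smul_le_smul_of_nonneg_left inf_le_left (by positivity)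
        _ = a := inv_smul_smul₀ hc.ne' a
      · calc c⁻¹ • ((c • a) ⊓ (c • b)) ≤ c⁻¹ • (c • b) :=
            smul_le_smul_of_nonneg_left inf_le_right (by positivity)
        _ = b := inv_smul_smul₀ hc.ne' b
    calc (c • a) ⊓ (c • b) = c • (c⁻¹ • ((c • a) ⊓ (c • b))) := (smul_inv_smul₀ hc.ne' _).symm
    _ ≤ c • (a ⊓ b) := smul_le_smul_of_nonneg_left h1 hc.le

lemma aux_smul_sup {c : ℝ} (hc : 0 ≤ c) (a b : X) : c • (a ⊔ b) = (c • a) ⊔ (c • b) := by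
  rcases hc.eq_or_lt with h | h
  · simp [← h]
  · apply le_antisymm
    · have h1 : a ⊔ b ≤ c⁻¹ • ((c • a) ⊔ (c • b)) := by
        refine sup_le ?_ ?_
        · calc a = c⁻¹ • (c • a) := (inv_smul_smul₀ h.ne' a).symm
          _ ≤ c⁻¹ • ((c • a) ⊔ (c • b)) :=
            smul_le_smul_of_nonneg_left le_sup_left (by positivity)
        · calc b = c⁻¹ • (c • b) := (inv_smul_smul₀ h.ne' b).symm
          _ ≤ c⁻¹ • ((c • a) ⊔ (c • b)) :=
            smul_le_smul_of_nonneg_left le_sup_right (by positivity)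
      calc c • (a ⊔ b) ≤ c • (c⁻¹ • ((c • a) ⊔ (c • b))) :=
          smul_le_smul_of_nonneg_left h1 h.le
      _ = (c • a) ⊔ (c • b) := smul_inv_smul₀ h.ne' _
    · exact sup_le (smul_le_smul_of_nonneg_left le_sup_left h.le)
        (smul_le_smul_of_nonneg_left le_sup_right h.le)

lemma aux_disj_smul {u v : X} (hu : 0 ≤ u) (hv : 0 ≤ v) (huv : u ⊓ v = 0)
    {c d : ℝ} (hc : 0 ≤ c) (hd : 0 ≤ d) : (c • u) ⊓ (d • v) = 0 := by
  set m := max c d with hm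
  have hm0 : 0 ≤ m := le_max_of_le_left hc
  rcases hm0.eq_or_lt with h | h
  · have hc0 : c = 0 := le_antisymm (by rw [h]; exact le_max_left c d) hc
    have hd0 : d = 0 := le_antisymm (by rw [h]; exact le_max_right c d) hd
    simp [hc0, hd0]
  · refine le_antisymm ?_ (le_inf (smul_nonneg hc hu) (smul_nonneg hd hv))
    calc (c • u) ⊓ (d • v) ≤ (m • u) ⊓ (m • v) :=
        inf_le_inf (aux_smul_mono_scalar (le_max_left c d) hu)
          (aux_smul_mono_scalar (le_max_right c d) hv)
    _ = m • (u ⊓ v) := (aux_smul_inf h u v).symm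
    _ = 0 := by rw [huv, smul_zero]

lemma aux_inf_add_subadd {a b c : X} (ha : 0 ≤ a) (hb : 0 ≤ b) (hc : 0 ≤ c) :
    a ⊓ (b + c) ≤ a ⊓ b + a ⊓ c := by
  have key : a ⊓ b + a ⊓ c = ((a + a) ⊓ (a + c)) ⊓ ((b + a) ⊓ (b + c)) := by
    rw [inf_add, add_inf a c a, add_inf a c b]
  rw [key]
  refine le_inf (le_inf ?_ ?_) (le_inf ?_ inf_le_right)
  · exact inf_le_left.trans (le_add_of_nonneg_left ha)
  · exact inf_le_left.trans (le_add_of_nonneg_right hc)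
  · exact inf_le_left.trans (le_add_of_nonneg_left hb)

lemma aux_lmono {l : X →ₗ[ℝ] ℝ} (hl : IsPositive l) {x y : X} (h : x ≤ y) : l x ≤ l y := by
  have := hl (y - x) (by simpa using h)
  simp only [map_sub] at this; linarith

noncomputable def phiAux (l : X →ₗ[ℝ] ℝ) (u : X) (y : X) : ℝ := ⨆ n : ℕ, l (y ⊓ (n : ℝ) • u)

section Phi
variable {l : X →ₗ[ℝ] ℝ} {u : X} (hl : IsPositive l) (hu : 0 ≤ u)
include hl hu

lemma phi_seq_mono (y : X) : Monotone fun n : ℕ => l (y ⊓ (n : ℝ) • u) := by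
  intro n m h
  exact aux_lmono hl (inf_le_inf_left y (aux_smul_mono_scalar (by exact_mod_cast h) hu))

lemma phi_bdd (y : X) : BddAbove (Set.range fun n : ℕ => l (y ⊓ (n : ℝ) • u)) := by
  refine ⟨l y, ?_⟩
  rintro r ⟨n, rfl⟩
  exact aux_lmono hl inf_le_left

lemma phi_le (y : X) : phiAux l u y ≤ l y :=
  ciSup_le fun n => aux_lmono hl inf_le_left

lemma phi_term_le (y : X) (n : ℕ) : l (y ⊓ (n : ℝ) • u) ≤ phiAux l u y :=
  le_ciSup (phi_bdd hl hu y) n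

lemma phi_nonneg {y : X} (hy : 0 ≤ y) : 0 ≤ phiAux l u y := by
  have h0 : y ⊓ ((0 : ℕ) : ℝ) • u = 0 := by
    rw [Nat.cast_zero, zero_smul]; exact inf_eq_right.mpr hy
  have := phi_term_le hl hu y 0
  rw [h0, map_zero] at this; exact this

lemma phi_zero : phiAux l u 0 = 0 := by
  have : ∀ n : ℕ, (0 : X) ⊓ (n : ℝ) • u = 0 := fun n =>
    inf_eq_left.mpr (smul_nonneg (by positivity) hu)
  simp [phiAux, this]

lemma phi_add {y z : X} (hy : 0 ≤ y) (hz : 0 ≤ z) :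
    phiAux l u (y + z) = phiAux l u y + phiAux l u z := by
  apply le_antisymm
  · refine ciSup_le fun n => ?_
    have hnu : 0 ≤ (n : ℝ) • u := smul_nonneg (by positivity) hu
    have h1 : (y + z) ⊓ (n : ℝ) • u ≤ y ⊓ (n : ℝ) • u + z ⊓ (n : ℝ) • u := by
      calc (y + z) ⊓ (n : ℝ) • u = (n : ℝ) • u ⊓ (y + z) := inf_comm ..
      _ ≤ (n : ℝ) • u ⊓ y + (n : ℝ) • u ⊓ z := aux_inf_add_subadd hnu hy hz
      _ = y ⊓ (n : ℝ) • u + z ⊓ (n : ℝ) • u := by rw [inf_comm, inf_comm ((n:ℝ)•u) z]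
    calc l ((y + z) ⊓ (n : ℝ) • u) ≤ l (y ⊓ (n:ℝ)•u) + l (z ⊓ (n:ℝ)•u) := by
          have := aux_lmono hl h1; rwa [map_add] at this
    _ ≤ phiAux l u y + phiAux l u z :=
        add_le_add (phi_term_le hl hu y n) (phi_term_le hl hu z n)
  · have key : ∀ n m : ℕ, l (y ⊓ (n:ℝ)•u) + l (z ⊓ (m:ℝ)•u) ≤ phiAux l u (y + z) := by
      intro n m
      set k := max n m with hk
      have h1 : l (y ⊓ (n:ℝ)•u) ≤ l (y ⊓ (k:ℝ)•u) := phi_seq_mono hl hu y (le_max_left n m)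
      have h2 : l (z ⊓ (m:ℝ)•u) ≤ l (z ⊓ (k:ℝ)•u) := phi_seq_mono hl hu z (le_max_right n m)
      have h3 : y ⊓ (k:ℝ)•u + z ⊓ (k:ℝ)•u ≤ (y + z) ⊓ ((((2*k : ℕ) : ℝ)) • u) := by
        refine le_inf (add_le_add inf_le_left inf_le_left) ?_
        have : ((2*k : ℕ) : ℝ) • u = (k:ℝ)•u + (k:ℝ)•u := by
          push_cast; rw [← add_smul]; ring_nf
        rw [this]
        exact add_le_add inf_le_right inf_le_right
      have h4 := aux_lmono hl h3
      rw [map_add] at h4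
      have h5 := phi_term_le hl hu (y + z) (2*k)
      linarith
    have h1 : phiAux l u y ≤ phiAux l u (y + z) - phiAux l u z := by
      refine ciSup_le fun n => ?_
      have h2 : phiAux l u z ≤ phiAux l u (y + z) - l (y ⊓ (n:ℝ)•u) := by
        refine ciSup_le fun m => ?_
        have := key n m; linarith
      linarith
    linarith

lemma phi_smul {c : ℝ} (hc : 0 ≤ c) {y : X} (hy : 0 ≤ y) :
    phiAux l u (c • y) = c * phiAux l u y := by
  rcases hc.eq_or_lt with h | h
  · rw [← h, zero_smul, phi_zero hl hu, zero_mul]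
  · have hterm : ∀ n : ℕ, l ((c • y) ⊓ (n:ℝ) • u) = c * l (y ⊓ ((n:ℝ)/c) • u) := by
      intro n
      have h1 : c • (y ⊓ ((n:ℝ)/c) • u) = (c • y) ⊓ ((n:ℝ) • u) := by
        rw [aux_smul_inf h, smul_smul, mul_div_cancel₀ _ h.ne']
      rw [← h1, map_smul, smul_eq_mul]
    have hbdd : BddAbove (Set.range fun n : ℕ => c * l (y ⊓ ((n:ℝ)/c) • u)) := by
      refine ⟨c * l y, ?_⟩
      rintro r ⟨n, rfl⟩
      exact mul_le_mul_of_nonneg_left (aux_lmono hl inf_le_left) h.le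
    have heq : phiAux l u (c • y) = ⨆ n : ℕ, c * l (y ⊓ ((n:ℝ)/c) • u) := by
      unfold phiAux; congr 1; ext n; exact hterm n
    rw [heq]
    apply le_antisymm
    · refine ciSup_le fun n => ?_
      obtain ⟨m, hm⟩ := exists_nat_ge ((n:ℝ)/c)
      have h1 : y ⊓ ((n:ℝ)/c) • u ≤ y ⊓ (m:ℝ) • u :=
        inf_le_inf_left y (aux_smul_mono_scalar hm hu)
      calc c * l (y ⊓ ((n:ℝ)/c) • u) ≤ c * l (y ⊓ (m:ℝ) • u) :=
            mul_le_mul_of_nonneg_left (aux_lmono hl h1) h.le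
      _ ≤ c * phiAux l u y := mul_le_mul_of_nonneg_left (phi_term_le hl hu y m) h.le
    · rw [mul_comm, ← le_div_iff₀ h]
      refine ciSup_le fun n => ?_
      obtain ⟨m, hm⟩ := exists_nat_ge (c * n)
      have h1 : (n : ℝ) ≤ (m:ℝ)/c := (le_div_iff₀ h).mpr (by linarith [mul_comm c (n:ℝ)])
      have h2 : y ⊓ (n:ℝ) • u ≤ y ⊓ ((m:ℝ)/c) • u :=
        inf_le_inf_left y (aux_smul_mono_scalar h1 hu)
      have h3 : c * l (y ⊓ ((m:ℝ)/c) • u) ≤ ⨆ n : ℕ, c * l (y ⊓ ((n:ℝ)/c) • u) :=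
        le_ciSup hbdd m
      have h4 := aux_lmono hl h2
      rw [le_div_iff₀ h]
      calc l (y ⊓ (n:ℝ) • u) * c = c * l (y ⊓ (n:ℝ) • u) := mul_comm _ _
      _ ≤ c * l (y ⊓ ((m:ℝ)/c) • u) := mul_le_mul_of_nonneg_left h4 h.le
      _ ≤ _ := h3

end Phi

section Main
variable {l : X →ₗ[ℝ] ℝ} (hl : IsPositive l)
include hl

lemma star_lemma (hker : IsGrothendieckSubspace (LinearMap.ker l))
    (x y z : X) (h1 : l x = l z) (h2 : l y = l z) :
    l (x ⊔ y ⊔ z) + l (x ⊓ y ⊓ z) = 2 * l z := by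
  have hx : x - z ∈ LinearMap.ker l := by
    rw [LinearMap.mem_ker, map_sub, h1, sub_self]
  have hy : y - z ∈ LinearMap.ker l := by
    rw [LinearMap.mem_ker, map_sub, h2, sub_self]
  have hG := hker _ hx _ hy
  rw [LinearMap.mem_ker] at hG
  have e1 : (x - z) ⊔ (y - z) ⊔ 0 = (x ⊔ y ⊔ z) - z := by
    rw [show (0:X) = z - z by simp, ← sup_sub, ← sup_sub]
  have e2 : (x - z) ⊓ (y - z) ⊓ 0 = (x ⊓ y ⊓ z) - z := by
    rw [show (0:X) = z - z by simp, ← inf_sub, ← inf_sub]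
  rw [e1, e2, map_add, map_sub, map_sub] at hG
  linarith

lemma C1_lemma (hker : IsGrothendieckSubspace (LinearMap.ker l))
    (A B Z : X) (hA : 0 ≤ A) (hB : 0 ≤ B) (hZ : 0 ≤ Z) (hAB : A ⊓ B = 0)
    (hlA : l A = l Z) (hlB : l B = l Z) : l ((Z - A - B) ⊔ 0) = 0 := by
  have h1 : A ⊔ B = A + B := by
    have := inf_add_sup A B
    rw [hAB, zero_add] at this; exact this
  have h2 : A ⊓ B ⊓ Z = 0 := by rw [hAB]; exact inf_eq_left.mpr hZ
  have h3 := star_lemma hl hker A B Z hlA hlB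
  rw [h2, map_zero, add_zero, h1] at h3
  have h4 : (A + B) ⊔ Z = (Z - (A + B)) ⊔ 0 + (A + B) := by
    rw [sup_add, zero_add, sub_add_cancel, sup_comm]
  have h5 : l ((A + B) ⊔ Z) = l ((Z - (A + B)) ⊔ 0) + l (A + B) := by
    rw [h4, map_add]
  rw [map_add] at h5
  rw [sub_sub]
  linarith

lemma no_three (hker : IsGrothendieckSubspace (LinearMap.ker l))
    {a b c : X} (ha : 0 ≤ a) (hb : 0 ≤ b) (hc : 0 ≤ c)
    (hab : a ⊓ b = 0) (hac : a ⊓ c = 0) (hbc : b ⊓ c = 0)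
    (hla : 0 < l a) (hlb : 0 < l b) (hlc : 0 < l c) : False := by
  set A := ((l c) / (l a)) • a with hAdef
  set B := ((l c) / (l b)) • b with hBdef
  have hA0 : 0 ≤ A := smul_nonneg (by positivity) ha
  have hB0 : 0 ≤ B := smul_nonneg (by positivity) hb
  have hAB : A ⊓ B = 0 := aux_disj_smul ha hb hab (by positivity) (by positivity)
  have hlA : l A = l c := by
    rw [hAdef, map_smul, smul_eq_mul, div_mul_cancel₀ _ hla.ne']
  have hlB : l B = l c := by
    rw [hBdef, map_smul, smul_eq_mul, div_mul_cancel₀ _ hlb.ne']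
  have hC1 := C1_lemma hl hker A B c hA0 hB0 hc hAB hlA hlB
  have hcA : c ⊓ A = 0 := by
    have h := aux_disj_smul hc ha (by rw [inf_comm]; exact hac) zero_le_one
      (by positivity : (0:ℝ) ≤ l c / l a)
    rwa [one_smul] at h
  have hcB : c ⊓ B = 0 := by
    have h := aux_disj_smul hc hb (by rw [inf_comm]; exact hbc) zero_le_one
      (by positivity : (0:ℝ) ≤ l c / l b)
    rwa [one_smul] at h
  have hsum : c ⊓ (A + B) = 0 := by
    refine le_antisymm ?_ (le_inf hc (add_nonneg hA0 hB0))
    calc c ⊓ (A + B) ≤ c ⊓ A + c ⊓ B := aux_inf_add_subadd hc hA0 hB0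
    _ = 0 := by rw [hcA, hcB, add_zero]
  have hkey : (c - A - B) ⊔ 0 = c := by
    rw [sub_sub]
    have e1 : (c - (A + B)) ⊔ 0 = c ⊔ (A + B) - (A + B) := by
      rw [show (0:X) = (A + B) - (A + B) by simp, ← sup_sub]
    have e2 : c ⊔ (A + B) = c + (A + B) := by
      have h := inf_add_sup c (A + B)
      rw [hsum, zero_add] at h; exact h
    rw [e1, e2]; abel
  rw [hkey] at hC1
  linarith
end Main

section Main2
variable {l : X →ₗ[ℝ] ℝ} (hl : IsPositive l)
include hl

lemma riesz_of_disj
    (hd : ∀ p q : X, 0 ≤ p → 0 ≤ q → p ⊓ q = 0 → l p = 0 ∨ l q = 0) :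
    IsRieszHom l := by
  intro x y
  have hsum : l (x ⊓ y) + l (x ⊔ y) = l x + l y := by
    rw [← map_add, inf_add_sup]
    exact map_add l x y
  set a := x - x ⊓ y with hadef
  set b := y - x ⊓ y with hbdef
  have ha : 0 ≤ a := sub_nonneg.mpr inf_le_left
  have hb : 0 ≤ b := sub_nonneg.mpr inf_le_right
  have hab : a ⊓ b = 0 := by
    rw [hadef, hbdef, ← inf_sub, sub_self]
  have hla : l a = l x - l (x ⊓ y) := by rw [hadef, map_sub]
  have hlb : l b = l y - l (x ⊓ y) := by rw [hbdef, map_sub]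
  rcases hd a b ha hb hab with h | h
  · have hxy : l x = l (x ⊓ y) := by linarith
    have hle : l x ≤ l y := by
      rw [hxy]; exact aux_lmono hl inf_le_right
    rw [sup_eq_right.mpr hle]
    linarith
  · have hxy : l y = l (x ⊓ y) := by linarith
    have hle : l y ≤ l x := by
      rw [hxy]; exact aux_lmono hl inf_le_left
    rw [sup_eq_left.mpr hle]
    linarith

lemma exists_disj (hnot : ¬ IsRieszHom l) :
    ∃ u v : X, 0 ≤ u ∧ 0 ≤ v ∧ u ⊓ v = 0 ∧ 0 < l u ∧ 0 < l v := by
  by_contra h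
  push_neg at h
  apply hnot
  apply riesz_of_disj hl
  intro p q hp hq hpq
  rcases (hl p hp).eq_or_lt with h1 | h1
  · exact Or.inl h1.symm
  · exact Or.inr (le_antisymm (h p q hp hq hpq h1) (hl q hq))

end Main2

noncomputable def rieszPart (l : X →ₗ[ℝ] ℝ) (u : X) (hl : IsPositive l) (hu : 0 ≤ u) :
    X →ₗ[ℝ] ℝ where
  toFun x := phiAux l u x⁺ - phiAux l u x⁻
  map_add' x y := by
    have hid : (x + y)⁺ + (x⁻ + y⁻) = (x + y)⁻ + (x⁺ + y⁺) := by
      have e1 : (x + y)⁺ = x + y + (x + y)⁻ :=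
        sub_eq_iff_eq_add.mp (posPart_sub_negPart (x + y))
      have e2 : x⁺ = x + x⁻ := sub_eq_iff_eq_add.mp (posPart_sub_negPart x)
      have e3 : y⁺ = y + y⁻ := sub_eq_iff_eq_add.mp (posPart_sub_negPart y)
      rw [e1, e2, e3]; abel
    have L : phiAux l u ((x + y)⁺ + (x⁻ + y⁻)) =
        phiAux l u (x + y)⁺ + (phiAux l u x⁻ + phiAux l u y⁻) := by
      rw [phi_add hl hu (posPart_nonneg _) (add_nonneg (negPart_nonneg _) (negPart_nonneg _)),
        phi_add hl hu (negPart_nonneg _) (negPart_nonneg _)]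
    have R : phiAux l u ((x + y)⁻ + (x⁺ + y⁺)) =
        phiAux l u (x + y)⁻ + (phiAux l u x⁺ + phiAux l u y⁺) := by
      rw [phi_add hl hu (negPart_nonneg _) (add_nonneg (posPart_nonneg _) (posPart_nonneg _)),
        phi_add hl hu (posPart_nonneg _) (posPart_nonneg _)]
    have hEq : phiAux l u ((x + y)⁺ + (x⁻ + y⁻)) = phiAux l u ((x + y)⁻ + (x⁺ + y⁺)) := by
      rw [hid]
    rw [L, R] at hEq
    linarith
  map_smul' c x := by
    dsimp only [RingHom.id_apply]
    rcases le_or_gt 0 c with hc | hc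
    · have hp : (c • x)⁺ = c • x⁺ := by
        rw [posPart_def, posPart_def, aux_smul_sup hc, smul_zero]
      have hn : (c • x)⁻ = c • x⁻ := by
        rw [← posPart_neg, ← posPart_neg, ← smul_neg, posPart_def, posPart_def,
          aux_smul_sup hc, smul_zero]
      rw [hp, hn, phi_smul hl hu hc (posPart_nonneg _), phi_smul hl hu hc (negPart_nonneg _),
        smul_eq_mul]
      ring
    · set d := -c with hd
      have hd0 : 0 ≤ d := by rw [hd]; linarith
      have hcx : c • x = d • (-x) := by rw [hd, smul_neg, neg_smul, neg_neg]
      have hp : (c • x)⁺ = d • x⁻ := by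
        have h9 : (d • (-x))⁺ = d • (-x)⁺ := by
          rw [posPart_def, posPart_def, aux_smul_sup hd0, smul_zero]
        rw [hcx, h9, posPart_neg]
      have hn : (c • x)⁻ = d • x⁺ := by
        rw [← posPart_neg, hcx, smul_neg, neg_neg, posPart_def, posPart_def,
          aux_smul_sup hd0, smul_zero]
      rw [hp, hn, phi_smul hl hu hd0 (negPart_nonneg _), phi_smul hl hu hd0 (posPart_nonneg _),
        smul_eq_mul, hd]
      ring

lemma rieszPart_apply_nonneg (l : X →ₗ[ℝ] ℝ) (u : X) (hl : IsPositive l) (hu : 0 ≤ u)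
    {x : X} (hx : 0 ≤ x) : rieszPart l u hl hu x = phiAux l u x := by
  show phiAux l u x⁺ - phiAux l u x⁻ = phiAux l u x
  rw [posPart_eq_self.mpr hx, negPart_eq_zero.mpr hx, phi_zero hl hu, sub_zero]

section Main3
variable {l : X →ₗ[ℝ] ℝ} (hl : IsPositive l)
include hl

lemma phi_pos_witness {p : X} (hp : 0 < phiAux l u p) : ∃ n : ℕ, 0 < l (p ⊓ (n:ℝ) • u) := by
  by_contra h
  push_neg at h
  have : phiAux l u p ≤ 0 := ciSup_le h
  linarith

lemma phi_disj (hker : IsGrothendieckSubspace (LinearMap.ker l))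
    {u v : X} (hu : 0 ≤ u) (hv : 0 ≤ v) (huv : u ⊓ v = 0) (hlv : 0 < l v)
    {p q : X} (hp : 0 ≤ p) (hq : 0 ≤ q) (hpq : p ⊓ q = 0) :
    phiAux l u p = 0 ∨ phiAux l u q = 0 := by
  by_contra h
  push_neg at h
  obtain ⟨h1, h2⟩ := h
  have hp' : 0 < phiAux l u p := (phi_nonneg hl hu hp).lt_of_ne (Ne.symm h1)
  have hq' : 0 < phiAux l u q := (phi_nonneg hl hu hq).lt_of_ne (Ne.symm h2)
  obtain ⟨n, hn⟩ := phi_pos_witness hl hp'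
  obtain ⟨m, hm⟩ := phi_pos_witness hl hq'
  set P := p ⊓ (n:ℝ) • u with hPdef
  set Q := q ⊓ (m:ℝ) • u with hQdef
  have hP0 : 0 ≤ P := le_inf hp (smul_nonneg (by positivity) hu)
  have hQ0 : 0 ≤ Q := le_inf hq (smul_nonneg (by positivity) hu)
  have hPQ : P ⊓ Q = 0 :=
    le_antisymm ((inf_le_inf inf_le_left inf_le_left).trans hpq.le) (le_inf hP0 hQ0)
  have hPv : P ⊓ v = 0 := by
    refine le_antisymm ?_ (le_inf hP0 hv)
    calc P ⊓ v ≤ ((n:ℝ) • u) ⊓ ((1:ℝ) • v) := by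
          rw [one_smul]; exact inf_le_inf inf_le_right (le_refl v)
    _ = 0 := aux_disj_smul hu hv huv (by positivity) zero_le_one
  have hQv : Q ⊓ v = 0 := by
    refine le_antisymm ?_ (le_inf hQ0 hv)
    calc Q ⊓ v ≤ ((m:ℝ) • u) ⊓ ((1:ℝ) • v) := by
          rw [one_smul]; exact inf_le_inf inf_le_right (le_refl v)
    _ = 0 := aux_disj_smul hu hv huv (by positivity) zero_le_one
  exact no_three hl hker hP0 hQ0 hv hPQ hPv hQv hn hm hlv

lemma decomp (hker : IsGrothendieckSubspace (LinearMap.ker l))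
    {u v : X} (hu : 0 ≤ u) (hv : 0 ≤ v) (huv : u ⊓ v = 0)
    (hlu : 0 < l u) (hlv : 0 < l v) {x : X} (hx : 0 ≤ x) :
    l x = phiAux l u x + phiAux l v x := by
  have hdisjAB : ∀ n m : ℕ, (x ⊓ (n:ℝ)•u) ⊓ (x ⊓ (m:ℝ)•v) = 0 := by
    intro n m
    refine le_antisymm ?_ (le_inf (le_inf hx (smul_nonneg (by positivity) hu))
      (le_inf hx (smul_nonneg (by positivity) hv)))
    calc (x ⊓ (n:ℝ)•u) ⊓ (x ⊓ (m:ℝ)•v) ≤ ((n:ℝ)•u) ⊓ ((m:ℝ)•v) :=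
        inf_le_inf inf_le_right inf_le_right
    _ = 0 := aux_disj_smul hu hv huv (by positivity) (by positivity)
  have hsumle : ∀ n m : ℕ, x ⊓ (n:ℝ)•u + x ⊓ (m:ℝ)•v ≤ x := by
    intro n m
    have h1 := inf_add_sup (x ⊓ (n:ℝ)•u) (x ⊓ (m:ℝ)•v)
    rw [hdisjAB n m, zero_add] at h1
    rw [← h1]
    exact sup_le inf_le_left inf_le_left
  -- upper bound
  have hub : phiAux l u x + phiAux l v x ≤ l x := by
    have key : ∀ n m : ℕ, l (x ⊓ (n:ℝ)•u) + l (x ⊓ (m:ℝ)•v) ≤ l x := by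
      intro n m
      have := aux_lmono hl (hsumle n m)
      rwa [map_add] at this
    have h1 : phiAux l u x ≤ l x - phiAux l v x := by
      refine ciSup_le fun n => ?_
      have h2 : phiAux l v x ≤ l x - l (x ⊓ (n:ℝ)•u) := by
        refine ciSup_le fun m => ?_
        have := key n m; linarith
      linarith
    linarith
  refine le_antisymm ?_ hub
  -- lower bound
  obtain ⟨n, hn⟩ := exists_nat_ge (max (l x / l u) (l x / l v))
  have hn1 : l x / l u ≤ (n:ℝ) := (le_max_left _ _).trans hn
  have hn2 : l x / l v ≤ (n:ℝ) := (le_max_right _ _).trans hn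
  set A := x ⊓ (n:ℝ)•u with hAdef
  set B := x ⊓ (n:ℝ)•v with hBdef
  have hA0 : 0 ≤ A := le_inf hx (smul_nonneg (by positivity) hu)
  have hB0 : 0 ≤ B := le_inf hx (smul_nonneg (by positivity) hv)
  set r := x - A - B with hrdef
  have hr0 : 0 ≤ r := by
    rw [hrdef, sub_sub, sub_nonneg]
    exact hsumle n n
  have hlx : l x = l A + l B + l r := by rw [hrdef]; simp only [map_sub]; ring
  have hAphi : l A ≤ phiAux l u x := phi_term_le hl hu x n
  have hBphi : l B ≤ phiAux l v x := phi_term_le hl hv x n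
  rcases (hl r hr0).eq_or_lt with hρ | hρ
  · linarith
  · set ρ := l r with hρdef
    have hρx : ρ ≤ l x := by
      have : r ≤ x := by
        rw [hrdef, sub_sub]
        exact sub_le_self x (add_nonneg hA0 hB0)
      exact aux_lmono hl this
    set U := (ρ / l u) • u with hUdef
    set V := (ρ / l v) • v with hVdef
    have hU0 : 0 ≤ U := smul_nonneg (by positivity) hu
    have hV0 : 0 ≤ V := smul_nonneg (by positivity) hv
    have hUV : U ⊓ V = 0 := aux_disj_smul hu hv huv (by positivity) (by positivity)
    have hlU : l U = ρ := by rw [hUdef, map_smul, smul_eq_mul, div_mul_cancel₀ _ hlu.ne']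
    have hlV : l V = ρ := by rw [hVdef, map_smul, smul_eq_mul, div_mul_cancel₀ _ hlv.ne']
    have hC1 := C1_lemma hl hker U V r hU0 hV0 hr0 hUV (by rw [hlU]) (by rw [hlV])
    rw [sub_sub] at hC1
    have hsup : r ⊔ (U + V) = (r - (U + V)) ⊔ 0 + (U + V) := by
      rw [sup_add, zero_add, sub_add_cancel]
    have hinf : l (r ⊓ (U + V)) = ρ := by
      have h1 := inf_add_sup r (U + V)
      have h2 : l (r ⊓ (U + V)) + l (r ⊔ (U + V)) = l r + l (U + V) := by
        rw [← map_add, h1, map_add]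
      have h3 : l (r ⊔ (U + V)) = l ((r - (U + V)) ⊔ 0) + l (U + V) := by
        rw [hsup, map_add]
      rw [hC1, zero_add] at h3
      rw [h3] at h2
      linarith
    set s := r ⊓ (U + V) with hsdef
    have hs0 : 0 ≤ s := le_inf hr0 (add_nonneg hU0 hV0)
    have hsub : s ≤ s ⊓ U + s ⊓ V := by
      have h1 : s ⊓ (U + V) = s := inf_eq_left.mpr inf_le_right
      calc s = s ⊓ (U + V) := h1.symm
      _ ≤ s ⊓ U + s ⊓ V := aux_inf_add_subadd hs0 hU0 hV0
    have hUn : U ≤ (n:ℝ) • u := by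
      refine aux_smul_mono_scalar ?_ hu
      calc ρ / l u ≤ l x / l u := by gcongr
      _ ≤ (n:ℝ) := hn1
    have hVn : V ≤ (n:ℝ) • v := by
      refine aux_smul_mono_scalar ?_ hv
      calc ρ / l v ≤ l x / l v := by gcongr
      _ ≤ (n:ℝ) := hn2
    have hclaimU : A + r ⊓ ((n:ℝ) • u) ≤ x ⊓ (((2*n : ℕ):ℝ) • u) := by
      refine le_inf ?_ ?_
      · have h1 : A + r ⊓ ((n:ℝ) • u) ≤ A + r := add_le_add le_rfl inf_le_left
        have h2 : A + r = x - B := by rw [hrdef]; abel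
        have h3 : x - B ≤ x := sub_le_self x hB0
        calc A + r ⊓ ((n:ℝ)•u) ≤ A + r := h1
        _ = x - B := h2
        _ ≤ x := h3
      · have h4 : ((2*n:ℕ):ℝ) • u = (n:ℝ)•u + (n:ℝ)•u := by
          push_cast; rw [← add_smul]; ring_nf
        rw [h4]
        exact add_le_add inf_le_right inf_le_right
    have hclaimV : B + r ⊓ ((n:ℝ) • v) ≤ x ⊓ (((2*n : ℕ):ℝ) • v) := by
      refine le_inf ?_ ?_
      · have h1 : B + r ⊓ ((n:ℝ) • v) ≤ B + r := add_le_add le_rfl inf_le_left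
        have h2 : B + r = x - A := by rw [hrdef]; abel
        have h3 : x - A ≤ x := sub_le_self x hA0
        calc B + r ⊓ ((n:ℝ)•v) ≤ B + r := h1
        _ = x - A := h2
        _ ≤ x := h3
      · have h4 : ((2*n:ℕ):ℝ) • v = (n:ℝ)•v + (n:ℝ)•v := by
          push_cast; rw [← add_smul]; ring_nf
        rw [h4]
        exact add_le_add inf_le_right inf_le_right
    have hsU : l (s ⊓ U) ≤ phiAux l u x - l A := by
      have h1 : s ⊓ U ≤ r ⊓ ((n:ℝ)•u) := inf_le_inf inf_le_left hUn
      have h2 := aux_lmono hl hclaimU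
      rw [map_add] at h2
      have h3 := phi_term_le hl hu x (2*n)
      have h4 := aux_lmono hl h1
      linarith
    have hsV : l (s ⊓ V) ≤ phiAux l v x - l B := by
      have h1 : s ⊓ V ≤ r ⊓ ((n:ℝ)•v) := inf_le_inf inf_le_left hVn
      have h2 := aux_lmono hl hclaimV
      rw [map_add] at h2
      have h3 := phi_term_le hl hv x (2*n)
      have h4 := aux_lmono hl h1
      linarith
    have h5 := aux_lmono hl hsub
    rw [map_add] at h5
    linarith [hinf]
end Main3


theorem positive_grothendieck_not_hom_decomposes (l : X →ₗ[ℝ] ℝ)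
    (hl : IsPositive l) (hker : IsGrothendieckSubspace (LinearMap.ker l))
    (hnot : ¬ IsRieszHom l) :
    ∃ f g : X →ₗ[ℝ] ℝ, IsRieszHom f ∧ IsRieszHom g ∧ f ≠ 0 ∧ g ≠ 0 ∧ l = f + g := by
  obtain ⟨u, v, hu, hv, huv, hlu, hlv⟩ := exists_disj hl hnot
  have hvu : v ⊓ u = 0 := by rw [inf_comm]; exact huv
  set f := rieszPart l u hl hu with hfdef
  set g := rieszPart l v hl hv with hgdef
  have hfpos : IsPositive f := by
    intro x hx
    rw [hfdef, rieszPart_apply_nonneg l u hl hu hx]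
    exact phi_nonneg hl hu hx
  have hgpos : IsPositive g := by
    intro x hx
    rw [hgdef, rieszPart_apply_nonneg l v hl hv hx]
    exact phi_nonneg hl hv hx
  have hfR : IsRieszHom f := by
    refine riesz_of_disj hfpos fun p q hp hq hpq => ?_
    rw [hfdef, rieszPart_apply_nonneg l u hl hu hp, rieszPart_apply_nonneg l u hl hu hq]
    exact phi_disj hl hker hu hv huv hlv hp hq hpq
  have hgR : IsRieszHom g := by
    refine riesz_of_disj hgpos fun p q hp hq hpq => ?_
    rw [hgdef, rieszPart_apply_nonneg l v hl hv hp, rieszPart_apply_nonneg l v hl hv hq]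
    exact phi_disj hl hker hv hu hvu hlu hp hq hpq
  have hfu : 0 < f u := by
    rw [hfdef, rieszPart_apply_nonneg l u hl hu hu]
    have h1 : u ⊓ ((1:ℕ):ℝ) • u = u := by rw [Nat.cast_one, one_smul, inf_idem]
    have h2 := phi_term_le hl hu u 1
    rw [h1] at h2
    linarith
  have hgv : 0 < g v := by
    rw [hgdef, rieszPart_apply_nonneg l v hl hv hv]
    have h1 : v ⊓ ((1:ℕ):ℝ) • v = v := by rw [Nat.cast_one, one_smul, inf_idem]
    have h2 := phi_term_le hl hv v 1
    rw [h1] at h2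
    linarith
  refine ⟨f, g, hfR, hgR, ?_, ?_, ?_⟩
  · intro h; rw [h] at hfu; simp at hfu
  · intro h; rw [h] at hgv; simp at hgv
  · apply LinearMap.ext
    intro x
    have hp := decomp hl hker hu hv huv hlu hlv (posPart_nonneg x)
    have hm := decomp hl hker hu hv huv hlu hlv (negPart_nonneg x)
    have hfx : f x = phiAux l u x⁺ - phiAux l u x⁻ := rfl
    have hgx : g x = phiAux l v x⁺ - phiAux l v x⁻ := rfl
    have hlx : l x = l x⁺ - l x⁻ := by rw [← map_sub, posPart_sub_negPart]
    rw [LinearMap.add_apply, hfx, hgx, hlx]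
    linarith
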